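/- arXiv:1802.04615 — 2 statements merged into one kernel-verified Lean document; each statement's English description precedes it below -/
import Mathlib

section
/- Let p = q = 1/2 (symmetric simple random walk). For every n ≥ 0, the exact identity E((M_n^+)^2) + E(M_n^+) = n holds. -/
open Finset Filter

/-- The value `±1` of a single step of the walk, driven by a Boolean. -/
def step (b : Bool) : ℤ := if b then 1 else -1

/-- The partial sum `S_j = X_1 + ⋯ + X_j` of the simple random walk driven by `ω`. -/
def walk {n : ℕ} (ω : Fin n → Bool) (j : ℕ) : ℤ :=
  ∑ i ∈ Finset.univ.filter fun i : Fin n => (i : ℕ) < j, step (ω i)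

/-- `M_n^+ = max_{0 ≤ j ≤ n} S_j`. -/
def mplus {n : ℕ} (ω : Fin n → Bool) : ℤ :=
  (Finset.range (n + 1)).sup' (by simp) (walk ω)

/-- `M_n^- = -min_{0 ≤ j ≤ n} S_j`. -/
def mminus {n : ℕ} (ω : Fin n → Bool) : ℤ :=
  -((Finset.range (n + 1)).inf' (by simp) (walk ω))

/-- The probability weight of the path `ω` when `P{Xᵢ = 1} = p`, `P{Xᵢ = -1} = 1 - p`,
independently over `i`. -/
def wt (p : ℝ) {n : ℕ} (ω : Fin n → Bool) : ℝ :=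
  ∏ i, if ω i then p else 1 - p

/-- The probability of an event `A` for a walk of length `n`. -/
noncomputable def prob (p : ℝ) {n : ℕ} (A : Set (Fin n → Bool)) : ℝ :=
  ∑ ω : Fin n → Bool, A.indicator (wt p) ω

/-- The expectation of a functional `f` of a walk of length `n`. -/
noncomputable def expectation (p : ℝ) {n : ℕ} (f : (Fin n → Bool) → ℝ) : ℝ :=
  ∑ ω : Fin n → Bool, wt p ω * f ω

lemma wt_half {n : ℕ} (ω : Fin n → Bool) : wt (1/2) ω = (1/2) ^ n := by
  unfold wt
  have : ∀ i : Fin n, (if ω i then (1:ℝ)/2 else 1 - 1/2) = 1/2 := by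
    intro i; split <;> norm_num
  simp only [this, Finset.prod_const, Finset.card_univ, Fintype.card_fin]

lemma walk_zero {n : ℕ} (ω : Fin n → Bool) : walk ω 0 = 0 := by
  unfold walk; simp

lemma walk_as_sum {n : ℕ} (ω : Fin n → Bool) (j : ℕ) :
    walk ω j = ∑ i : Fin n, if (i : ℕ) < j then step (ω i) else 0 := by
  unfold walk; rw [Finset.sum_filter]

lemma walk_succ_tail {n : ℕ} (ω : Fin (n+1) → Bool) (j : ℕ) :
    walk ω (j + 1) = step (ω 0) + walk (Fin.tail ω) j := by
  rw [walk_as_sum, walk_as_sum, Fin.sum_univ_succ]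
  simp [Fin.tail, Nat.succ_lt_succ_iff]

lemma mplus_nonneg {n : ℕ} (ω : Fin n → Bool) : 0 ≤ mplus ω := by
  have h0 : (0:ℕ) ∈ Finset.range (n+1) := by simp
  have := Finset.le_sup' (walk ω) h0
  rwa [walk_zero] at this

lemma mplus_succ {n : ℕ} (ω : Fin (n+1) → Bool) :
    mplus ω = max 0 (step (ω 0) + mplus (Fin.tail ω)) := by
  apply le_antisymm
  · apply Finset.sup'_le
    intro j hj
    match j with
    | 0 => rw [walk_zero]; exact le_max_left _ _
    | k + 1 =>
      rw [walk_succ_tail]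
      refine le_trans ?_ (le_max_right _ _)
      apply add_le_add le_rfl
      apply Finset.le_sup'
      simp at hj ⊢; omega
  · apply max_le (mplus_nonneg ω)
    obtain ⟨j, hj, hje⟩ := Finset.exists_mem_eq_sup' (by simp : (Finset.range (n+1)).Nonempty)
      (walk (Fin.tail ω))
    rw [show mplus (Fin.tail ω) = _ from hje, ← walk_succ_tail]
    apply Finset.le_sup'
    simp at hj ⊢; omega

lemma key_step (m : ℤ) (hm : 0 ≤ m) :
    (max 0 (1 + m))^2 + max 0 (1 + m) + ((max 0 (-1 + m))^2 + max 0 (-1 + m))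
      = 2 * (m^2 + m) + 2 := by
  rcases eq_or_lt_of_le hm with h | h
  · rw [← h]; norm_num
  · have h1 : max 0 (1 + m) = 1 + m := max_eq_right (by omega)
    have h2 : max 0 (-1 + m) = -1 + m := max_eq_right (by omega)
    rw [h1, h2]; ring

lemma key (n : ℕ) :
    ∑ ω : Fin n → Bool, ((mplus ω)^2 + mplus ω) = n * 2^n := by
  induction n with
  | zero =>
    have : ∀ ω : Fin 0 → Bool, mplus ω = 0 := by
      intro ω
      unfold mplus
      simp [walk_zero]
    simp [this]
  | succ n ih =>
    rw [← (Fin.consEquiv (fun _ : Fin (n+1) => Bool)).sum_comp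
        (fun ω => (mplus ω)^2 + mplus ω)]
    rw [Fintype.sum_prod_type_right]
    have step_cons : ∀ (b : Bool) (ω : Fin n → Bool),
        (mplus (Fin.consEquiv _ (b, ω)))^2 + mplus (Fin.consEquiv _ (b, ω))
          = (max 0 (step b + mplus ω))^2 + max 0 (step b + mplus ω) := by
      intro b ω
      rw [mplus_succ]
      simp [Fin.consEquiv, Fin.tail_cons]
    calc ∑ ω : Fin n → Bool, ∑ b : Bool,
          ((mplus (Fin.consEquiv _ (b, ω)))^2 + mplus (Fin.consEquiv _ (b, ω)))
        = ∑ ω : Fin n → Bool, (2 * ((mplus ω)^2 + mplus ω) + 2) := by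
          apply Finset.sum_congr rfl
          intro ω _
          rw [Fintype.sum_bool, step_cons, step_cons]
          simp only [step]
          exact key_step (mplus ω) (mplus_nonneg ω)
      _ = 2 * (n * 2^n) + 2 * 2^n := by
          rw [Finset.sum_add_distrib, ← Finset.mul_sum, ih]
          simp [Finset.card_univ]; ring
      _ = (n+1 : ℕ) * 2^(n+1) := by push_cast; ring

theorem statement1 (n : ℕ) :
    expectation (1/2) (fun ω : Fin n → Bool => ((mplus ω : ℝ)) ^ 2) +
      expectation (1/2) (fun ω : Fin n → Bool => (mplus ω : ℝ)) = n := by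
  unfold expectation
  rw [← Finset.sum_add_distrib]
  have hr : ∀ ω : Fin n → Bool,
      wt (1/2) ω * (mplus ω : ℝ)^2 + wt (1/2) ω * (mplus ω : ℝ)
        = (1/2)^n * (((mplus ω)^2 + mplus ω : ℤ) : ℝ) := by
    intro ω
    rw [wt_half]; push_cast; ring
  rw [Finset.sum_congr rfl (fun ω _ => hr ω), ← Finset.mul_sum, ← Int.cast_sum, key]
  push_cast
  rw [mul_comm ((n:ℝ)) ((2:ℝ)^n), ← mul_assoc, ← mul_pow]
  norm_num
end

section
/- Let p = q = 1/2 (symmetric simple random walk). Then the variance satisfies Var(M_n^+)/n → 1 - 2/π as n → ∞. -/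
open Finset Filter

lemma step_not (b : Bool) : step (!b) = - step b := by cases b <;> simp [step]

lemma step_le_one (b : Bool) : step b ≤ 1 := by cases b <;> simp [step]

lemma neg_one_le_step (b : Bool) : -1 ≤ step b := by cases b <;> simp [step]

lemma walk_succ {n : ℕ} (ω : Fin n → Bool) (j : ℕ) (h : j < n) :
    walk ω (j + 1) = walk ω j + step (ω ⟨j, h⟩) := by
  rw [walk, walk, ← Finset.sum_filter_add_sum_filter_not
    (Finset.univ.filter fun i : Fin n => (i : ℕ) < j + 1) (fun i : Fin n => (i : ℕ) < j)]
  congr 1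
  · congr 1
    ext i
    simp only [Finset.mem_filter, Finset.mem_univ, true_and]
    constructor
    · rintro ⟨_, h2⟩; exact h2
    · intro h2; exact ⟨Nat.lt_succ_of_lt h2, h2⟩
  · have : (Finset.univ.filter fun i : Fin n => (i : ℕ) < j + 1).filter
        (fun i : Fin n => ¬ (i : ℕ) < j) = {⟨j, h⟩} := by
      ext i
      simp only [Finset.mem_filter, Finset.mem_univ, true_and, Finset.mem_singleton,
        not_lt, Nat.lt_succ_iff]
      constructor
      · rintro ⟨h1, h2⟩; exact Fin.ext (le_antisymm h1 h2)
      · rintro rfl; simp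
    rw [this, Finset.sum_singleton]

lemma walk_stable {n : ℕ} (ω : Fin n → Bool) {j : ℕ} (h : n ≤ j) :
    walk ω j = walk ω n := by
  unfold walk
  congr 1
  ext i
  simp only [Finset.mem_filter, Finset.mem_univ, true_and]
  exact ⟨fun _ => i.isLt, fun _ => lt_of_lt_of_le i.isLt h⟩

lemma walk_succ' {n : ℕ} (ω : Fin n → Bool) (j : ℕ) :
    walk ω (j + 1) = walk ω j + if h : j < n then step (ω ⟨j, h⟩) else 0 := by
  split
  · next h => exact walk_succ ω j h
  · next h =>
    rw [walk_stable ω (le_of_not_gt h), walk_stable ω (Nat.le_succ_of_le (le_of_not_gt h)),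
      add_zero]

lemma walk_succ_sub_le {n : ℕ} (ω : Fin n → Bool) (j : ℕ) :
    walk ω (j + 1) ≤ walk ω j + 1 := by
  rw [walk_succ']
  split
  · exact add_le_add_right (step_le_one _) _
  · simp

lemma walk_le {n : ℕ} (ω : Fin n → Bool) (j : ℕ) : walk ω j ≤ j := by
  induction j with
  | zero => simp [walk_zero]
  | succ j ih =>
    calc walk ω (j+1) ≤ walk ω j + 1 := walk_succ_sub_le ω j
    _ ≤ (j : ℤ) + 1 := by linarith
    _ = ((j+1 : ℕ) : ℤ) := by push_cast; ring

lemma walk_mem_le {n : ℕ} (ω : Fin n → Bool) {j : ℕ} (h : j ≤ n) :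
    walk ω j ≤ mplus ω := by
  exact Finset.le_sup' (walk ω) (Finset.mem_range.2 (Nat.lt_succ_of_le h))

lemma mplus_le {n : ℕ} (ω : Fin n → Bool) : mplus ω ≤ n := by
  apply Finset.sup'_le
  intro j hj
  calc walk ω j ≤ j := walk_le ω j
  _ ≤ n := by exact_mod_cast Nat.lt_succ_iff.1 (Finset.mem_range.1 hj)

lemma le_mplus_iff {n : ℕ} (ω : Fin n → Bool) (k : ℤ) :
    k ≤ mplus ω ↔ ∃ j ≤ n, k ≤ walk ω j := by
  rw [mplus, Finset.le_sup'_iff]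
  constructor
  · rintro ⟨j, hj, h⟩; exact ⟨j, Nat.lt_succ_iff.1 (Finset.mem_range.1 hj), h⟩
  · rintro ⟨j, hj, h⟩; exact ⟨j, Finset.mem_range.2 (Nat.lt_succ_of_le hj), h⟩

/-- Discrete IVT: if the walk reaches level ≥ k ≥ 0 by time j, it hits k exactly. -/
lemma hit_of_le {n : ℕ} (ω : Fin n → Bool) (k : ℤ) (hk : 0 ≤ k) :
    ∀ j : ℕ, k ≤ walk ω j → ∃ i ≤ j, walk ω i = k := by
  intro j
  induction j with
  | zero =>
    intro h
    rw [walk_zero] at h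
    exact ⟨0, le_refl 0, by rw [walk_zero]; omega⟩
  | succ j ih =>
    intro h
    by_cases h2 : k ≤ walk ω j
    · obtain ⟨i, hi, hw⟩ := ih h2
      exact ⟨i, Nat.le_succ_of_le hi, hw⟩
    · refine ⟨j + 1, le_refl _, ?_⟩
      have := walk_succ_sub_le ω j
      omega

lemma le_mplus_iff_hit {n : ℕ} (ω : Fin n → Bool) (k : ℤ) (hk : 0 ≤ k) :
    k ≤ mplus ω ↔ ∃ j ≤ n, walk ω j = k := by
  rw [le_mplus_iff]
  constructor
  · rintro ⟨j, hj, h⟩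
    obtain ⟨i, hi, hw⟩ := hit_of_le ω k hk j h
    exact ⟨i, le_trans hi hj, hw⟩
  · rintro ⟨j, hj, h⟩; exact ⟨j, hj, le_of_eq h.symm⟩

open Classical in
/-- First hitting time of level `k`, or `0` if never hit. -/
noncomputable def tau {n : ℕ} (ω : Fin n → Bool) (k : ℤ) : ℕ :=
  if h : ∃ j, walk ω j = k then Nat.find h else 0

/-- Path reflected after the first hitting time of `k`. -/
noncomputable def refl' {n : ℕ} (k : ℤ) (ω : Fin n → Bool) : Fin n → Bool :=
  fun i => if (i : ℕ) < tau ω k then ω i else !(ω i)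

lemma tau_spec {n : ℕ} {ω : Fin n → Bool} {k : ℤ} (h : ∃ j, walk ω j = k) :
    walk ω (tau ω k) = k := by
  classical
  rw [tau, dif_pos h]
  exact Nat.find_spec h

lemma tau_min {n : ℕ} {ω : Fin n → Bool} {k : ℤ} (h : ∃ j, walk ω j = k)
    {j : ℕ} (hj : j < tau ω k) : walk ω j ≠ k := by
  classical
  rw [tau, dif_pos h] at hj
  exact Nat.find_min h hj

lemma tau_le_of_spec {n : ℕ} {ω : Fin n → Bool} {k : ℤ} {j : ℕ} (hj : walk ω j = k) :
    tau ω k ≤ j := by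
  classical
  rw [tau, dif_pos ⟨j, hj⟩]
  exact Nat.find_le hj

lemma tau_le_n {n : ℕ} {ω : Fin n → Bool} {k : ℤ} (h : ∃ j, walk ω j = k) :
    tau ω k ≤ n := by
  obtain ⟨j, hj⟩ := h
  rcases le_or_gt j n with hle | hlt
  · exact le_trans (tau_le_of_spec hj) hle
  · rw [walk_stable ω hlt.le] at hj
    exact tau_le_of_spec hj

lemma walk_refl_of_le {n : ℕ} (k : ℤ) (ω : Fin n → Bool) :
    ∀ j ≤ tau ω k, walk (refl' k ω) j = walk ω j := by
  intro j
  induction j with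
  | zero => intro _; rw [walk_zero, walk_zero]
  | succ j ih =>
    intro hj
    have hj' : j < tau ω k := hj
    rw [walk_succ', walk_succ', ih hj'.le]
    congr 1
    split
    · next h => simp [refl', hj']
    · rfl

lemma walk_refl_of_ge {n : ℕ} {k : ℤ} {ω : Fin n → Bool} (h : ∃ j, walk ω j = k) :
    ∀ j, tau ω k ≤ j → walk (refl' k ω) j = 2 * k - walk ω j := by
  intro j hj
  induction j, hj using Nat.le_induction with
  | base =>
    rw [walk_refl_of_le k ω _ le_rfl, tau_spec h]
    ring
  | succ j hj ih =>
    rw [walk_succ', walk_succ', ih]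
    split
    · next hlt =>
      have : ¬ ((j : ℕ) < tau ω k) := not_lt.2 hj
      simp only [refl', this, if_false, step_not]
      ring
    · ring

lemma hit_refl {n : ℕ} {k : ℤ} {ω : Fin n → Bool} (h : ∃ j, walk ω j = k) :
    ∃ j, walk (refl' k ω) j = k :=
  ⟨tau ω k, by rw [walk_refl_of_le k ω _ le_rfl, tau_spec h]⟩

lemma tau_refl {n : ℕ} {k : ℤ} {ω : Fin n → Bool} (h : ∃ j, walk ω j = k) :
    tau (refl' k ω) k = tau ω k := by
  apply le_antisymm
  · exact tau_le_of_spec (by rw [walk_refl_of_le k ω _ le_rfl, tau_spec h])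
  · by_contra hc
    push_neg at hc
    have h2 := tau_spec (hit_refl h)
    rw [walk_refl_of_le k ω _ hc.le] at h2
    exact tau_min h hc h2

lemma refl_refl {n : ℕ} {k : ℤ} {ω : Fin n → Bool} (h : ∃ j, walk ω j = k) :
    refl' k (refl' k ω) = ω := by
  funext i
  simp only [refl', tau_refl h]
  split <;> simp

lemma card_refl (n : ℕ) (k : ℤ) (hk : 1 ≤ k) :
    (Finset.univ.filter fun ω : Fin n → Bool => k ≤ mplus ω ∧ walk ω n < k).card
      = (Finset.univ.filter fun ω : Fin n → Bool => k < walk ω n).card := by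
  apply Finset.card_nbij' (i := refl' k) (j := refl' k)
  · intro ω hω
    simp only [Finset.mem_coe, Finset.mem_filter, Finset.mem_univ, true_and] at hω ⊢
    obtain ⟨h1, h2⟩ := hω
    obtain ⟨j, hj, hwj⟩ := (le_mplus_iff_hit ω k (by linarith)).1 h1
    have hhit : ∃ j, walk ω j = k := ⟨j, hwj⟩
    rw [walk_refl_of_ge hhit n (tau_le_n hhit)]
    linarith
  · intro ω hω
    simp only [Finset.mem_coe, Finset.mem_filter, Finset.mem_univ, true_and] at hω ⊢
    obtain ⟨i, hi, hwi⟩ := hit_of_le ω k (by linarith) n hω.le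
    have hhit : ∃ j, walk ω j = k := ⟨i, hwi⟩
    constructor
    · rw [le_mplus_iff_hit _ k (by linarith)]
      exact ⟨tau ω k, tau_le_n hhit, by rw [walk_refl_of_le k ω _ le_rfl, tau_spec hhit]⟩
    · rw [walk_refl_of_ge hhit n (tau_le_n hhit)]
      linarith
  · intro ω hω
    simp only [Finset.mem_coe, Finset.mem_filter, Finset.mem_univ, true_and] at hω
    obtain ⟨j, hj, hwj⟩ := (le_mplus_iff_hit ω k (by linarith)).1 hω.1
    exact refl_refl ⟨j, hwj⟩
  · intro ω hω
    simp only [Finset.mem_coe, Finset.mem_filter, Finset.mem_univ, true_and] at hω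
    obtain ⟨i, hi, hwi⟩ := hit_of_le ω k (by linarith) n hω.le
    exact refl_refl ⟨i, hwi⟩

/-- The reflection principle: `#{M ≥ k} = #{S_n ≥ k} + #{S_n ≥ k+1}` for `k ≥ 1`. -/
lemma card_mplus (n : ℕ) (k : ℤ) (hk : 1 ≤ k) :
    (Finset.univ.filter fun ω : Fin n → Bool => k ≤ mplus ω).card
      = (Finset.univ.filter fun ω : Fin n → Bool => k ≤ walk ω n).card
        + (Finset.univ.filter fun ω : Fin n → Bool => k + 1 ≤ walk ω n).card := by
  classical
  have hsplit := Finset.card_filter_add_card_filter_not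
    (s := Finset.univ.filter fun ω : Fin n → Bool => k ≤ mplus ω)
    (p := fun ω => k ≤ walk ω n)
  rw [Finset.filter_filter, Finset.filter_filter] at hsplit
  have e1 : (Finset.univ.filter fun ω : Fin n → Bool => k ≤ mplus ω ∧ k ≤ walk ω n)
      = Finset.univ.filter fun ω : Fin n → Bool => k ≤ walk ω n := by
    apply Finset.filter_congr
    intro ω _
    simp only [and_iff_right_iff_imp]
    intro h
    exact le_trans h (walk_mem_le ω le_rfl)
  have e2 : (Finset.univ.filter fun ω : Fin n → Bool => k ≤ mplus ω ∧ ¬ k ≤ walk ω n)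
      = Finset.univ.filter fun ω : Fin n → Bool => k ≤ mplus ω ∧ walk ω n < k := by
    apply Finset.filter_congr
    intro ω _
    rw [not_le]
  rw [e1, e2, card_refl n k hk] at hsplit
  have e3 : (Finset.univ.filter fun ω : Fin n → Bool => k < walk ω n)
      = Finset.univ.filter fun ω : Fin n → Bool => k + 1 ≤ walk ω n := by
    apply Finset.filter_congr
    intro ω _
    exact Int.lt_iff_add_one_le
  rw [e3] at hsplit
  omega

/-- `#{ω : S_n ≥ k}`. -/
def Hcard (n k : ℕ) : ℕ :=
  (Finset.univ.filter fun ω : Fin n → Bool => (k : ℤ) ≤ walk ω n).card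

/-- `#{ω : M_n ≥ k}`. -/
def Mcard (n k : ℕ) : ℕ :=
  (Finset.univ.filter fun ω : Fin n → Bool => (k : ℤ) ≤ mplus ω).card

/-- `#{ω : S_n = 0}`. -/
def Zcard (n : ℕ) : ℕ :=
  (Finset.univ.filter fun ω : Fin n → Bool => walk ω n = 0).card

lemma Mcard_eq (n k : ℕ) : Mcard n (k + 1) = Hcard n (k + 1) + Hcard n (k + 2) := by
  have := card_mplus n ((k : ℤ) + 1) (by omega)
  rw [Mcard, Hcard, Hcard]
  push_cast
  convert this using 3
  ext ω
  simp only [Finset.mem_filter, Finset.mem_univ, true_and]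
  constructor <;> intro h <;> omega

lemma Hcard_top (n : ℕ) : Hcard n (n + 1) = 0 := by
  rw [Hcard, Finset.card_eq_zero, Finset.filter_eq_empty_iff]
  intro ω _
  have := walk_le ω n
  push_cast
  omega

lemma layer_one (n : ℕ) (x : ℤ) (h0 : 0 ≤ x) (hn : x ≤ n) :
    ∑ k ∈ Finset.range n, (if ((k : ℤ) + 1 ≤ x) then (1 : ℤ) else 0) = x := by
  rw [← Finset.sum_filter]
  have : (Finset.range n).filter (fun k : ℕ => ((k : ℤ) + 1 ≤ x)) = Finset.range x.toNat := by
    ext k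
    simp only [Finset.mem_filter, Finset.mem_range]
    omega
  rw [this, Finset.sum_const, Finset.card_range]
  simp only [nsmul_eq_mul, mul_one]
  omega

lemma sum_odd (m : ℕ) : ∑ k ∈ Finset.range m, (2 * (k : ℤ) + 1) = (m : ℤ) ^ 2 := by
  induction m with
  | zero => simp
  | succ m ih => rw [Finset.sum_range_succ, ih]; push_cast; ring

lemma layer_sq (n : ℕ) (x : ℤ) (h0 : 0 ≤ x) (hn : x ≤ n) :
    ∑ k ∈ Finset.range n, (if ((k : ℤ) + 1 ≤ x) then (2 * (k : ℤ) + 1) else 0) = x ^ 2 := by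
  rw [← Finset.sum_filter]
  have : (Finset.range n).filter (fun k : ℕ => ((k : ℤ) + 1 ≤ x)) = Finset.range x.toNat := by
    ext k
    simp only [Finset.mem_filter, Finset.mem_range]
    omega
  rw [this, sum_odd]
  congr 1
  omega

lemma sum_layer {n : ℕ} (g : (Fin n → Bool) → ℤ) (c : ℕ → ℤ) :
    ∑ ω : Fin n → Bool, ∑ k ∈ Finset.range n,
        (if ((k : ℤ) + 1 ≤ g ω) then c k else 0)
      = ∑ k ∈ Finset.range n,
          c k * ((Finset.univ.filter fun ω : Fin n → Bool => (k : ℤ) + 1 ≤ g ω).card : ℤ) := by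
  rw [Finset.sum_comm]
  congr 1
  funext k
  rw [← Finset.sum_filter, Finset.sum_const, nsmul_eq_mul, mul_comm]

lemma walk_not {n : ℕ} (ω : Fin n → Bool) (j : ℕ) :
    walk (fun i => !(ω i)) j = - walk ω j := by
  rw [walk, walk, ← Finset.sum_neg_distrib]
  exact Finset.sum_congr rfl fun i _ => step_not (ω i)

lemma sum_neg_walk {n : ℕ} (f : ℤ → ℤ) :
    ∑ ω : Fin n → Bool, f (walk ω n) = ∑ ω : Fin n → Bool, f (- walk ω n) := by
  apply Fintype.sum_bijective (fun ω i => !(ω i))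
  · constructor
    · intro a b hab
      funext i
      have := congrFun hab i
      simpa using this
    · intro ω
      exact ⟨fun i => !(ω i), by funext i; simp⟩
  · intro ω
    simp [walk_not]

lemma walk_n_eq {n : ℕ} (ω : Fin n → Bool) : walk ω n = ∑ i : Fin n, step (ω i) := by
  rw [walk]
  congr 1
  ext i
  simp [i.isLt]

/-- `Σ_ω S_n² = n·2ⁿ`. -/
lemma sum_sq_walk (n : ℕ) : ∑ ω : Fin n → Bool, (walk ω n) ^ 2 = n * 2 ^ n := by
  classical
  have key : ∀ i j : Fin n, i ≠ j →
      ∑ ω : Fin n → Bool, step (ω i) * step (ω j) = 0 := by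
    intro i j hij
    apply Finset.sum_ninvolution (g := fun ω => Function.update ω i (!(ω i)))
    · intro ω
      have h1 : Function.update ω i (!(ω i)) i = !(ω i) := Function.update_self _ _ _
      have h2 : Function.update ω i (!(ω i)) j = ω j := Function.update_of_ne hij.symm _ _
      rw [h1, h2, step_not]
      ring
    · intro ω _ hc
      have := congrFun hc i
      rw [Function.update_self] at this
      simp at this
    · intro ω; exact Finset.mem_univ _
    · intro ω
      funext a
      by_cases ha : a = i
      · subst ha; simp [Function.update_self]
      · simp [Function.update_of_ne ha]
  calc ∑ ω : Fin n → Bool, (walk ω n) ^ 2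
      = ∑ ω : Fin n → Bool, ∑ i : Fin n, ∑ j : Fin n, step (ω i) * step (ω j) := by
        apply Finset.sum_congr rfl
        intro ω _
        rw [walk_n_eq, sq, Finset.sum_mul_sum]
    _ = ∑ i : Fin n, ∑ j : Fin n, ∑ ω : Fin n → Bool, step (ω i) * step (ω j) := by
        rw [Finset.sum_comm]
        congr 1
        funext i
        rw [Finset.sum_comm]
    _ = ∑ i : Fin n, ∑ j : Fin n, (if i = j then (2 ^ n : ℤ) else 0) := by
        apply Finset.sum_congr rfl; intro i _
        apply Finset.sum_congr rfl; intro j _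
        by_cases h : i = j
        · subst h
          simp only [if_pos rfl]
          have : ∀ ω : Fin n → Bool, step (ω i) * step (ω i) = 1 := by
            intro ω; cases (ω i) <;> simp [step]
          rw [Finset.sum_congr rfl (fun ω _ => this ω), Finset.sum_const]
          simp [Finset.card_univ]
        · rw [if_neg h]
          exact key i j h
    _ = n * 2 ^ n := by
        have h1 : ∀ i : Fin n, ∑ j : Fin n, (if i = j then (2 ^ n : ℤ) else 0) = 2 ^ n := by
          intro i; simp
        rw [Finset.sum_congr rfl (fun i _ => h1 i), Finset.sum_const, Finset.card_univ]
        simp [mul_comm]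

lemma max_add_max_neg (a : ℤ) : max a 0 + max (-a) 0 = |a| := by
  rcases le_total 0 a with h | h
  · rw [max_eq_left h, max_eq_right (neg_nonpos.2 h), abs_of_nonneg h, add_zero]
  · rw [max_eq_right h, max_eq_left (neg_nonneg.2 h), abs_of_nonpos h, zero_add]

lemma sq_max_add_sq_max_neg (a : ℤ) : (max a 0) ^ 2 + (max (-a) 0) ^ 2 = a ^ 2 := by
  rcases le_total 0 a with h | h
  · rw [max_eq_left h, max_eq_right (neg_nonpos.2 h)]; ring
  · rw [max_eq_right h, max_eq_left (neg_nonneg.2 h)]; ring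

def Tsum (n : ℕ) : ℤ := ∑ ω : Fin n → Bool, |walk ω n|
def Asum (n : ℕ) : ℤ := ∑ ω : Fin n → Bool, mplus ω
def Bsum (n : ℕ) : ℤ := ∑ ω : Fin n → Bool, (mplus ω) ^ 2

lemma walk_abs_le {n : ℕ} (ω : Fin n → Bool) : max (walk ω n) 0 ≤ (n : ℤ) := by
  have := walk_le ω n
  omega

lemma ite_max_walk {n : ℕ} (ω : Fin n → Bool) (c : ℕ → ℤ) :
    ∑ k ∈ Finset.range n, (if ((k : ℤ) + 1 ≤ walk ω n) then c k else 0)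
      = ∑ k ∈ Finset.range n, (if ((k : ℤ) + 1 ≤ max (walk ω n) 0) then c k else 0) := by
  apply Finset.sum_congr rfl
  intro k _
  apply if_congr _ rfl rfl
  constructor
  · intro h; exact le_max_of_le_left h
  · intro h
    rcases le_max_iff.1 h with h' | h'
    · exact h'
    · exfalso; omega

/-- `Σ_k H_{k+1} = Σ_ω max(S_n,0)`. -/
lemma sum_H_eq (n : ℕ) :
    ∑ k ∈ Finset.range n, (Hcard n (k + 1) : ℤ)
      = ∑ ω : Fin n → Bool, max (walk ω n) 0 := by
  have h1 : ∀ ω : Fin n → Bool,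
      max (walk ω n) 0 = ∑ k ∈ Finset.range n,
        (if ((k : ℤ) + 1 ≤ walk ω n) then (1 : ℤ) else 0) := by
    intro ω
    rw [ite_max_walk ω (fun _ => 1), layer_one n _ (le_max_right _ _) (walk_abs_le ω)]
  rw [Finset.sum_congr rfl (fun ω _ => h1 ω), sum_layer (fun ω => walk ω n) (fun _ => 1)]
  apply Finset.sum_congr rfl
  intro k _
  rw [one_mul, Hcard]
  push_cast
  rfl

lemma sum_H_sq_eq (n : ℕ) :
    ∑ k ∈ Finset.range n, (2 * (k : ℤ) + 1) * (Hcard n (k + 1) : ℤ)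
      = ∑ ω : Fin n → Bool, (max (walk ω n) 0) ^ 2 := by
  have h1 : ∀ ω : Fin n → Bool,
      (max (walk ω n) 0) ^ 2 = ∑ k ∈ Finset.range n,
        (if ((k : ℤ) + 1 ≤ walk ω n) then (2 * (k : ℤ) + 1) else 0) := by
    intro ω
    rw [ite_max_walk ω (fun k => 2 * (k : ℤ) + 1),
      layer_sq n _ (le_max_right _ _) (walk_abs_le ω)]
  rw [Finset.sum_congr rfl (fun ω _ => h1 ω), sum_layer (fun ω => walk ω n) _]
  rfl

/-- `2 Σ_k H_{k+1} = T_n`. -/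
lemma two_sum_H (n : ℕ) :
    2 * ∑ k ∈ Finset.range n, (Hcard n (k + 1) : ℤ) = Tsum n := by
  rw [sum_H_eq, Tsum, two_mul]
  nth_rewrite 2 [sum_neg_walk (fun x => max x 0)]
  rw [← Finset.sum_add_distrib]
  exact Finset.sum_congr rfl fun ω _ => max_add_max_neg _

/-- `2 Σ_k (2k+1) H_{k+1} = n 2ⁿ`. -/
lemma two_sum_H_sq (n : ℕ) :
    2 * ∑ k ∈ Finset.range n, (2 * (k : ℤ) + 1) * (Hcard n (k + 1) : ℤ) = n * 2 ^ n := by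
  rw [sum_H_sq_eq, two_mul]
  nth_rewrite 2 [sum_neg_walk (fun x => (max x 0) ^ 2)]
  rw [← Finset.sum_add_distrib, ← sum_sq_walk n]
  exact Finset.sum_congr rfl fun ω _ => sq_max_add_sq_max_neg _

lemma sum_shift (f : ℕ → ℤ) (n : ℕ) :
    ∑ k ∈ Finset.range n, f (k + 2)
      = ∑ k ∈ Finset.range n, f (k + 1) + f (n + 1) - f 1 := by
  have h1 : ∑ k ∈ Finset.range (n + 1), f (k + 1)
      = ∑ k ∈ Finset.range n, f (k + 2) + f 1 := by
    have := Finset.sum_range_succ' (fun k => f (k + 1)) n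
    simpa [add_assoc] using this
  have h2 : ∑ k ∈ Finset.range (n + 1), f (k + 1)
      = ∑ k ∈ Finset.range n, f (k + 1) + f (n + 1) :=
    Finset.sum_range_succ (fun k => f (k + 1)) n
  omega

/-- `A_n = T_n - H_1`. -/
lemma Asum_eq (n : ℕ) : Asum n = Tsum n - (Hcard n 1 : ℤ) := by
  have h1 : Asum n = ∑ k ∈ Finset.range n, (Mcard n (k + 1) : ℤ) := by
    rw [Asum]
    have h2 : ∀ ω : Fin n → Bool, mplus ω = ∑ k ∈ Finset.range n,
        (if ((k : ℤ) + 1 ≤ mplus ω) then (1 : ℤ) else 0) :=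
      fun ω => (layer_one n _ (mplus_nonneg ω) (mplus_le ω)).symm
    rw [Finset.sum_congr rfl (fun ω _ => h2 ω), sum_layer mplus (fun _ => 1)]
    exact Finset.sum_congr rfl fun k _ => by rw [one_mul, Mcard]; push_cast; rfl
  have h3 : ∀ k ∈ Finset.range n, (Mcard n (k + 1) : ℤ)
      = (Hcard n (k + 1) : ℤ) + (Hcard n (k + 2) : ℤ) := by
    intro k _
    rw [Mcard_eq]
    push_cast
    ring
  rw [h1, Finset.sum_congr rfl h3, Finset.sum_add_distrib,
    sum_shift (fun k => (Hcard n k : ℤ)) n]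
  have h4 := two_sum_H n
  have h5 := Hcard_top n
  simp only [h5, Nat.cast_zero] at *
  omega

/-- `B_n = n·2ⁿ - A_n`. -/
lemma Bsum_eq (n : ℕ) : Bsum n = n * 2 ^ n - Asum n := by
  have h1 : Bsum n + Asum n = ∑ k ∈ Finset.range n,
      (2 * (k : ℤ) + 2) * (Mcard n (k + 1) : ℤ) := by
    rw [Bsum, Asum, ← Finset.sum_add_distrib]
    have h2 : ∀ ω : Fin n → Bool, (mplus ω) ^ 2 + mplus ω = ∑ k ∈ Finset.range n,
        (if ((k : ℤ) + 1 ≤ mplus ω) then (2 * (k : ℤ) + 2) else 0) := by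
      intro ω
      have e1 := layer_one n _ (mplus_nonneg ω) (mplus_le ω)
      have e2 := layer_sq n _ (mplus_nonneg ω) (mplus_le ω)
      calc (mplus ω) ^ 2 + mplus ω
          = (∑ k ∈ Finset.range n, (if ((k : ℤ) + 1 ≤ mplus ω) then (2 * (k : ℤ) + 1) else 0))
            + (∑ k ∈ Finset.range n, (if ((k : ℤ) + 1 ≤ mplus ω) then (1 : ℤ) else 0)) := by
            rw [e1, e2]
        _ = ∑ k ∈ Finset.range n,
            (if ((k : ℤ) + 1 ≤ mplus ω) then (2 * (k : ℤ) + 2) else 0) := by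
            rw [← Finset.sum_add_distrib]
            exact Finset.sum_congr rfl fun k _ => by split <;> ring
    rw [Finset.sum_congr rfl (fun ω _ => h2 ω), sum_layer mplus _]
    rfl
  have h3 : ∀ k ∈ Finset.range n, (2 * (k : ℤ) + 2) * (Mcard n (k + 1) : ℤ)
      = (2 * (k : ℤ) + 2) * (Hcard n (k + 1) : ℤ)
        + ((2 * ((k : ℤ) + 2) - 2) * (Hcard n (k + 2) : ℤ)) := by
    intro k _
    rw [Mcard_eq]
    push_cast
    ring
  have h4 := sum_shift (fun k => (2 * (k : ℤ) - 2) * (Hcard n k : ℤ)) n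
  rw [Finset.sum_congr rfl h3, Finset.sum_add_distrib] at h1
  have h5 : ∑ k ∈ Finset.range n, (2 * ((k : ℤ) + 2) - 2) * (Hcard n (k + 2) : ℤ)
      = ∑ k ∈ Finset.range n, (2 * ((k : ℤ) + 1) - 2) * (Hcard n (k + 1) : ℤ) := by
    have hpc : ((2 : ℤ) * ((n : ℤ) + 1) - 2) * (Hcard n (n + 1) : ℤ) = 0 := by
      rw [Hcard_top n]; ring
    calc ∑ k ∈ Finset.range n, (2 * ((k : ℤ) + 2) - 2) * (Hcard n (k + 2) : ℤ)
        = ∑ k ∈ Finset.range n, (2 * (((k + 2 : ℕ) : ℤ)) - 2) * (Hcard n (k + 2) : ℤ) := by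
          apply Finset.sum_congr rfl; intro k _; push_cast; ring
      _ = ∑ k ∈ Finset.range n, (2 * (((k + 1 : ℕ) : ℤ)) - 2) * (Hcard n (k + 1) : ℤ)
            + (2 * (((n + 1 : ℕ) : ℤ)) - 2) * (Hcard n (n + 1) : ℤ)
            - (2 * ((1 : ℕ) : ℤ) - 2) * (Hcard n 1 : ℤ) := h4
      _ = ∑ k ∈ Finset.range n, (2 * ((k : ℤ) + 1) - 2) * (Hcard n (k + 1) : ℤ) := by
          rw [Hcard_top n]
          push_cast
          ring
  rw [h5] at h1
  have h6 : Bsum n + Asum n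
      = 2 * ∑ k ∈ Finset.range n, (2 * (k : ℤ) + 1) * (Hcard n (k + 1) : ℤ) := by
    rw [h1, Finset.mul_sum, ← Finset.sum_add_distrib]
    apply Finset.sum_congr rfl; intro k _; ring
  rw [two_sum_H_sq n] at h6
  omega

/-- `2·#{S_n ≥ 1} + #{S_n = 0} = 2ⁿ`. -/
lemma two_H_one (n : ℕ) : 2 * (Hcard n 1 : ℤ) + (Zcard n : ℤ) = 2 ^ n := by
  classical
  have e1 : (Hcard n 1 : ℤ) = ∑ ω : Fin n → Bool, (if (1 : ℤ) ≤ walk ω n then (1:ℤ) else 0) := by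
    rw [← Finset.sum_filter, Finset.sum_const, nsmul_eq_mul, mul_one, Hcard]
    norm_num
  have e2 : (Zcard n : ℤ) = ∑ ω : Fin n → Bool, (if walk ω n = 0 then (1:ℤ) else 0) := by
    rw [← Finset.sum_filter, Finset.sum_const, nsmul_eq_mul, mul_one, Zcard]
  have e3 : ∑ ω : Fin n → Bool, (if (1 : ℤ) ≤ walk ω n then (1:ℤ) else 0)
      = ∑ ω : Fin n → Bool, (if (1 : ℤ) ≤ - walk ω n then (1:ℤ) else 0) :=
    sum_neg_walk (fun x => if (1 : ℤ) ≤ x then (1:ℤ) else 0)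
  have e4 : ∑ ω : Fin n → Bool,
      ((if (1 : ℤ) ≤ walk ω n then (1:ℤ) else 0)
        + (if (1 : ℤ) ≤ - walk ω n then (1:ℤ) else 0)
        + (if walk ω n = 0 then (1:ℤ) else 0)) = 2 ^ n := by
    have : ∀ ω : Fin n → Bool,
        (if (1 : ℤ) ≤ walk ω n then (1:ℤ) else 0)
          + (if (1 : ℤ) ≤ - walk ω n then (1:ℤ) else 0)
          + (if walk ω n = 0 then (1:ℤ) else 0) = 1 := by
      intro ω
      rcases lt_trichotomy (walk ω n) 0 with h | h | h
      · rw [if_neg (by omega), if_pos (by omega), if_neg (by omega)]; ring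
      · rw [if_neg (by omega), if_neg (by omega), if_pos h]; ring
      · rw [if_pos (by omega), if_neg (by omega), if_neg (by omega)]; ring
    rw [Finset.sum_congr rfl (fun ω _ => this ω), Finset.sum_const, Finset.card_univ]
    simp [Fintype.card_fun]
  rw [e1, e2]
  rw [Finset.sum_add_distrib, Finset.sum_add_distrib] at e4
  rw [← e3] at e4
  omega

lemma walk_restrict {n : ℕ} (ω : Fin (n + 1) → Bool) :
    ∀ j ≤ n, walk (fun i : Fin n => ω i.castSucc) j = walk ω j := by
  intro j
  induction j with
  | zero => intro _; rw [walk_zero, walk_zero]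
  | succ j ih =>
    intro hj
    have hjn : j < n := hj
    rw [walk_succ _ j hjn, walk_succ ω j (by omega), ih (by omega)]
    rfl

lemma Tsum_succ (n : ℕ) : Tsum (n + 1) = 2 * (Tsum n + (Zcard n : ℤ)) := by
  classical
  have key : ∀ ω : Fin (n + 1) → Bool,
      walk ω (n + 1) = walk (fun i : Fin n => ω i.castSucc) n + step (ω (Fin.last n)) := by
    intro ω
    rw [walk_succ ω n (by omega), walk_restrict ω n le_rfl]
    rfl
  have hbij : Function.Bijective (fun p : (Fin n → Bool) × Bool => Fin.snoc p.1 p.2 :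
      (Fin n → Bool) × Bool → (Fin (n + 1) → Bool)) := by
    constructor
    · rintro ⟨a, b⟩ ⟨c, d⟩ h
      simp only [Prod.mk.injEq]
      constructor
      · funext i
        have := congrFun h i.castSucc
        simpa [Fin.snoc_castSucc] using this
      · have := congrFun h (Fin.last n)
        simpa [Fin.snoc_last] using this
    · intro ω
      refine ⟨⟨fun i => ω i.castSucc, ω (Fin.last n)⟩, ?_⟩
      funext i
      induction i using Fin.lastCases with
      | last => exact Fin.snoc_last _ _
      | cast i => exact Fin.snoc_castSucc _ _ i
  have e1 : Tsum (n + 1) = ∑ p : (Fin n → Bool) × Bool, |walk p.1 n + step p.2| := by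
    rw [Tsum]
    refine (Fintype.sum_bijective _ hbij _ (fun ω => |walk ω (n + 1)|) ?_).symm
    intro p
    show |walk p.1 n + step p.2| = |walk (Fin.snoc p.1 p.2) (n + 1)|
    rw [key (Fin.snoc p.1 p.2)]
    congr 2
    · congr 1
      funext i
      simp [Fin.snoc_castSucc]
    · rw [Fin.snoc_last]
  rw [e1, Fintype.sum_prod_type]
  have e2 : ∀ ω : Fin n → Bool, ∑ b : Bool, |walk ω n + step b|
      = 2 * |walk ω n| + 2 * (if walk ω n = 0 then (1:ℤ) else 0) := by
    intro ω
    rw [Fintype.sum_bool]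
    have s1 : step true = 1 := rfl
    have s2 : step false = (-1) := rfl
    rw [s1, s2]
    rcases eq_or_ne (walk ω n) 0 with h | h
    · rw [h, if_pos rfl]; norm_num
    · rw [if_neg h]
      rcases lt_or_gt_of_ne h with h' | h'
      · rw [abs_of_nonpos (by omega), abs_of_nonpos (by omega), abs_of_nonpos (by omega)]
        ring
      · rw [abs_of_nonneg (by omega), abs_of_nonneg (by omega), abs_of_nonneg (by omega)]
        ring
  rw [Finset.sum_congr rfl (fun ω _ => e2 ω), Finset.sum_add_distrib, ← Finset.mul_sum,
    ← Finset.mul_sum, ← Tsum]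
  have e3 : ∑ ω : Fin n → Bool, (if walk ω n = 0 then (1:ℤ) else 0) = (Zcard n : ℤ) := by
    rw [← Finset.sum_filter, Finset.sum_const, nsmul_eq_mul, mul_one, Zcard]
  rw [e3]
  ring

lemma walk_n_count {n : ℕ} (ω : Fin n → Bool) :
    walk ω n = 2 * ((Finset.univ.filter fun i => ω i = true).card : ℤ) - n := by
  classical
  rw [walk_n_eq, ← Finset.sum_filter_add_sum_filter_not Finset.univ (fun i => ω i = true)]
  have h1 : ∑ i ∈ Finset.univ.filter (fun i => ω i = true), step (ω i)
      = ((Finset.univ.filter fun i => ω i = true).card : ℤ) := by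
    rw [Finset.sum_congr rfl (fun i hi => ?_), Finset.sum_const, nsmul_eq_mul, mul_one]
    have := (Finset.mem_filter.1 hi).2
    simp [step, this]
  have h2 : ∑ i ∈ Finset.univ.filter (fun i => ¬ ω i = true), step (ω i)
      = -(((Finset.univ.filter fun i => ¬ ω i = true).card : ℤ)) := by
    rw [Finset.sum_congr rfl (fun i hi => ?_), Finset.sum_const, nsmul_eq_mul, mul_neg_one]
    have := (Finset.mem_filter.1 hi).2
    simp only [Bool.not_eq_true] at this
    simp [step, this]
  rw [h1, h2]
  have h3 := Finset.card_filter_add_card_filter_not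
    (s := (Finset.univ : Finset (Fin n))) (p := fun i => ω i = true)
  rw [Finset.card_univ, Fintype.card_fin] at h3
  omega

lemma card_count (N t : ℕ) :
    (Finset.univ.filter fun ω : Fin N → Bool =>
      (Finset.univ.filter fun i => ω i = true).card = t).card = N.choose t := by
  classical
  have hfc : N.choose t = (Finset.powersetCard t (Finset.univ : Finset (Fin N))).card := by
    rw [Finset.card_powersetCard, Finset.card_univ, Fintype.card_fin]
  rw [hfc]
  apply Finset.card_nbij' (i := fun ω => Finset.univ.filter fun i => ω i = true)
    (j := fun s i => decide (i ∈ s))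
  · intro ω hω
    simp only [Finset.mem_coe, Finset.mem_filter, Finset.mem_univ, true_and] at hω
    simp only [Finset.mem_coe, Finset.mem_powersetCard]
    exact ⟨Finset.filter_subset _ _ |>.trans (by simp), hω⟩
  · intro s hs
    simp only [Finset.mem_coe, Finset.mem_powersetCard] at hs
    simp only [Finset.mem_coe, Finset.mem_filter, Finset.mem_univ, true_and]
    rw [← hs.2]
    congr 1
    ext i
    simp
  · intro ω hω
    funext i
    simp
  · intro s hs
    ext i
    simp

lemma Zcard_odd (m : ℕ) : Zcard (2 * m + 1) = 0 := by
  rw [Zcard, Finset.card_eq_zero, Finset.filter_eq_empty_iff]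
  intro ω _
  rw [walk_n_count]
  push_cast
  omega

lemma Zcard_even (m : ℕ) : Zcard (2 * m) = Nat.centralBinom m := by
  rw [Zcard, Nat.centralBinom, ← card_count (2 * m) m]
  congr 1
  apply Finset.filter_congr
  intro ω _
  rw [walk_n_count]
  constructor
  · intro h
    push_cast at h
    omega
  · intro h
    rw [h]
    push_cast
    omega

lemma Tsum_zero : Tsum 0 = 0 := by
  rw [Tsum]
  apply Finset.sum_eq_zero
  intro ω _
  rw [walk_zero]
  rfl

noncomputable def zz (m : ℕ) : ℝ := (Nat.centralBinom m : ℝ) / 4 ^ m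

lemma zz_pos (m : ℕ) : 0 < zz m := by
  apply div_pos
  · exact_mod_cast Nat.centralBinom_pos m
  · positivity

lemma zz_zero : zz 0 = 1 := by simp [zz, Nat.centralBinom]

lemma zz_succ (m : ℕ) : zz (m + 1) * (2 * (m : ℝ) + 2) = zz m * (2 * (m : ℝ) + 1) := by
  have key : ((m : ℝ) + 1) * (Nat.centralBinom (m + 1) : ℝ)
      = 2 * (2 * (m : ℝ) + 1) * (Nat.centralBinom m : ℝ) := by
    exact_mod_cast Nat.succ_mul_centralBinom_succ m
  rw [zz, zz]
  have h4 : (4 : ℝ) ^ (m + 1) = 4 * 4 ^ m := by ring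
  rw [h4]
  have hm : ((m : ℝ) + 1) ≠ 0 := by positivity
  have hp : (4 : ℝ) ^ m ≠ 0 := by positivity
  field_simp
  linear_combination 2 * key

lemma wallis_identity (k : ℕ) :
    (2 * (k : ℝ) + 1) * zz k ^ 2 *
      (∏ i ∈ Finset.range k, ((2 : ℝ) * i + 2) / (2 * i + 1) * ((2 * i + 2) / (2 * i + 3))) = 1 := by
  induction k with
  | zero => simp [zz_zero]
  | succ k ih =>
    rw [Finset.prod_range_succ]
    have h1 : (2 * (k : ℝ) + 1) ≠ 0 := by positivity
    have h2 : (2 * (k : ℝ) + 2) ≠ 0 := by positivity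
    have h3 : (2 * (k : ℝ) + 3) ≠ 0 := by positivity
    have hz := zz_succ k
    have e1 : zz (k + 1) = zz k * (2 * (k : ℝ) + 1) / (2 * (k : ℝ) + 2) := by
      field_simp at hz ⊢
      linarith
    rw [e1]
    push_cast
    field_simp
    field_simp at ih
    linear_combination (2 * (k:ℝ) + 3) * ih

lemma tendsto_zz_sq :
    Tendsto (fun k : ℕ => (2 * (k : ℝ) + 1) * zz k ^ 2) atTop (nhds (2 / Real.pi)) := by
  have hW := Real.tendsto_prod_pi_div_two
  have hne : (Real.pi / 2) ≠ 0 := by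
    have := Real.pi_pos
    positivity
  have hinv := hW.inv₀ hne
  have heq : ∀ k : ℕ, (2 * (k : ℝ) + 1) * zz k ^ 2
      = (∏ i ∈ Finset.range k,
          ((2 : ℝ) * i + 2) / (2 * i + 1) * ((2 * i + 2) / (2 * i + 3)))⁻¹ := by
    intro k
    exact eq_inv_of_mul_eq_one_left (wallis_identity k)
  rw [show (2 / Real.pi : ℝ) = (Real.pi / 2)⁻¹ by rw [inv_div]]
  exact Tendsto.congr (fun k => (heq k).symm) hinv

noncomputable def tt (n : ℕ) : ℝ := (Tsum n : ℝ) / 2 ^ n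

noncomputable def zc (n : ℕ) : ℝ := (Zcard n : ℝ) / 2 ^ n

lemma zc_even (m : ℕ) : zc (2 * m) = zz m := by
  rw [zc, zz, Zcard_even]
  congr 1
  rw [pow_mul]
  norm_num

lemma zc_odd (m : ℕ) : zc (2 * m + 1) = 0 := by
  rw [zc, Zcard_odd]
  simp

lemma tt_zero : tt 0 = 0 := by simp [tt, Tsum_zero]

lemma tt_succ (n : ℕ) : tt (n + 1) = tt n + zc n := by
  rw [tt, tt, zc, Tsum_succ]
  push_cast
  have h2 : (2 : ℝ) ^ (n + 1) = 2 * 2 ^ n := by ring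
  rw [h2]
  have : (2 : ℝ) ^ n ≠ 0 := by positivity
  field_simp

lemma tt_formula_pair (m : ℕ) :
    tt (2 * m + 1) = (2 * (m : ℝ) + 1) * zz m
      ∧ tt (2 * m + 2) = (2 * (m : ℝ) + 1) * zz m := by
  induction m with
  | zero =>
    have hz0 : zc 0 = zz 0 := zc_even 0
    constructor
    · rw [show 2 * 0 + 1 = 0 + 1 by rfl, tt_succ 0, tt_zero, hz0]
      norm_num
    · rw [show 2 * 0 + 2 = (2 * 0 + 1) + 1 by rfl, tt_succ, zc_odd 0, tt_succ 0, tt_zero, hz0]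
      norm_num
  | succ m ih =>
    have h1 : tt (2 * (m + 1) + 1) = (2 * (((m + 1 : ℕ) : ℝ)) + 1) * zz (m + 1) := by
      have e : 2 * (m + 1) + 1 = (2 * m + 2) + 1 := by ring
      rw [e, tt_succ, ih.2, show 2 * m + 2 = 2 * (m + 1) by ring, zc_even]
      have hz := zz_succ m
      push_cast
      nlinarith [hz]
    refine ⟨h1, ?_⟩
    have e : 2 * (m + 1) + 2 = (2 * (m + 1) + 1) + 1 := by ring
    rw [e, tt_succ, h1, show 2 * (m + 1) + 1 = 2 * (m + 1) + 1 by rfl, zc_odd (m + 1)]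
    push_cast
    ring

lemma tt_formula (n : ℕ) (h : 1 ≤ n) :
    tt n = (2 * (((n - 1) / 2 : ℕ) : ℝ) + 1) * zz ((n - 1) / 2) := by
  rcases Nat.even_or_odd n with ⟨m, hm⟩ | ⟨m, hm⟩
  · have hm1 : 1 ≤ m := by omega
    have e : n = 2 * (m - 1) + 2 := by omega
    have e2 : (n - 1) / 2 = m - 1 := by omega
    rw [e2, e, (tt_formula_pair (m - 1)).2]
  · have e2 : (n - 1) / 2 = m := by omega
    rw [e2, hm, (tt_formula_pair m).1]

lemma Tsum_nonneg (n : ℕ) : 0 ≤ Tsum n :=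
  Finset.sum_nonneg fun ω _ => abs_nonneg _

lemma tt_nonneg (n : ℕ) : 0 ≤ tt n := by
  rw [tt]
  have := Tsum_nonneg n
  positivity

lemma tendsto_half_atTop : Tendsto (fun n : ℕ => (n - 1) / 2) atTop atTop := by
  apply Filter.tendsto_atTop_atTop.2
  intro b
  exact ⟨2 * b + 1, fun n hn => by omega⟩

lemma tendsto_tt_sq : Tendsto (fun n : ℕ => tt n ^ 2 / n) atTop (nhds (2 / Real.pi)) := by
  have hF : Tendsto (fun n : ℕ => (2 * (((n - 1) / 2 : ℕ) : ℝ) + 1) * zz ((n - 1) / 2) ^ 2)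
      atTop (nhds (2 / Real.pi)) := tendsto_zz_sq.comp tendsto_half_atTop
  have hG : Tendsto (fun n : ℕ => (2 * (((n - 1) / 2 : ℕ) : ℝ) + 1) / n) atTop (nhds 1) := by
    have hlow : Tendsto (fun n : ℕ => ((n : ℝ) - 1) / n) atTop (nhds 1) := by
      have h1 : Tendsto (fun n : ℕ => 1 - 1 / (n : ℝ)) atTop (nhds (1 - 0)) :=
        tendsto_const_nhds.sub tendsto_one_div_atTop_nhds_zero_nat
      rw [sub_zero] at h1
      apply h1.congr'
      filter_upwards [eventually_ge_atTop 1] with n hn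
      have : (n : ℝ) ≠ 0 := by positivity
      field_simp
    apply tendsto_of_tendsto_of_tendsto_of_le_of_le' hlow tendsto_const_nhds
    · filter_upwards [eventually_ge_atTop 1] with n hn
      have h2 : ((n : ℝ) - 1) ≤ 2 * (((n - 1) / 2 : ℕ) : ℝ) + 1 := by
        have h3 : n - 1 ≤ 2 * ((n - 1) / 2) + 1 := by omega
        have hc : ((n - 1 : ℕ) : ℝ) = (n : ℝ) - 1 := by push_cast [hn]; ring
        calc ((n : ℝ) - 1) = ((n - 1 : ℕ) : ℝ) := hc.symm
          _ ≤ ((2 * ((n - 1) / 2) + 1 : ℕ) : ℝ) := by exact_mod_cast h3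
          _ = 2 * (((n - 1) / 2 : ℕ) : ℝ) + 1 := by push_cast; ring
      have hn0 : (0 : ℝ) ≤ (n : ℝ) := Nat.cast_nonneg n
      exact div_le_div_of_nonneg_right h2 hn0
    · filter_upwards [eventually_ge_atTop 1] with n hn
      have hn0 : (0 : ℝ) < (n : ℝ) := by exact_mod_cast hn
      rw [div_le_one hn0]
      have h3 : 2 * ((n - 1) / 2) + 1 ≤ n := by omega
      calc 2 * (((n - 1) / 2 : ℕ) : ℝ) + 1 = ((2 * ((n - 1) / 2) + 1 : ℕ) : ℝ) := by
            push_cast; ring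
        _ ≤ (n : ℝ) := by exact_mod_cast h3
  have := hF.mul hG
  rw [mul_one] at this
  apply this.congr'
  filter_upwards [eventually_ge_atTop 1] with n hn
  rw [tt_formula n hn]
  ring

noncomputable def hh (n : ℕ) : ℝ := (Hcard n 1 : ℝ) / 2 ^ n

noncomputable def ee (n : ℕ) : ℝ := (Asum n : ℝ) / 2 ^ n

lemma hh_nonneg (n : ℕ) : 0 ≤ hh n := by
  rw [hh]; positivity

lemma hh_le_one (n : ℕ) : hh n ≤ 1 := by
  rw [hh, div_le_one (by positivity)]
  have h1 : Hcard n 1 ≤ Fintype.card (Fin n → Bool) := by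
    rw [← Finset.card_univ]
    exact Finset.card_le_card (Finset.filter_subset _ _)
  have h2 : Fintype.card (Fin n → Bool) = 2 ^ n := by
    simp [Fintype.card_fun]
  calc (Hcard n 1 : ℝ) ≤ ((2 ^ n : ℕ) : ℝ) := by rw [← h2]; exact_mod_cast h1
    _ = 2 ^ n := by push_cast; ring

lemma ee_eq (n : ℕ) : ee n = tt n - hh n := by
  rw [ee, tt, hh, Asum_eq]
  push_cast
  ring

lemma tendsto_tt_div : Tendsto (fun n : ℕ => tt n / n) atTop (nhds 0) := by
  have h1 : Tendsto (fun n : ℕ => tt n ^ 2 / n * (1 / n)) atTop (nhds (2 / Real.pi * 0)) :=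
    tendsto_tt_sq.mul tendsto_one_div_atTop_nhds_zero_nat
  rw [mul_zero] at h1
  have h2 := h1.sqrt
  rw [Real.sqrt_zero] at h2
  apply h2.congr'
  filter_upwards [eventually_ge_atTop 1] with n hn
  have hn0 : (0 : ℝ) < (n : ℝ) := by exact_mod_cast hn
  have e : tt n ^ 2 / n * (1 / n) = (tt n / n) ^ 2 := by rw [div_pow]; ring
  rw [e, Real.sqrt_sq (div_nonneg (tt_nonneg n) hn0.le)]

lemma tendsto_one_div_n : Tendsto (fun n : ℕ => (1 : ℝ) / n) atTop (nhds 0) :=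
  tendsto_one_div_atTop_nhds_zero_nat

lemma tendsto_hh_div : Tendsto (fun n : ℕ => hh n / n) atTop (nhds 0) := by
  apply tendsto_of_tendsto_of_tendsto_of_le_of_le' tendsto_const_nhds tendsto_one_div_n
  · filter_upwards [eventually_ge_atTop 1] with n hn
    have hn0 : (0 : ℝ) < (n : ℝ) := by exact_mod_cast hn
    exact div_nonneg (hh_nonneg n) hn0.le
  · filter_upwards [eventually_ge_atTop 1] with n hn
    have hn0 : (0 : ℝ) < (n : ℝ) := by exact_mod_cast hn
    exact div_le_div_of_nonneg_right (hh_le_one n) hn0.le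

lemma tendsto_ee_div : Tendsto (fun n : ℕ => ee n / n) atTop (nhds 0) := by
  have := tendsto_tt_div.sub tendsto_hh_div
  rw [sub_zero] at this
  apply this.congr
  intro n
  rw [ee_eq]
  ring

lemma tendsto_ee_sq : Tendsto (fun n : ℕ => ee n ^ 2 / n) atTop (nhds (2 / Real.pi)) := by
  have hth : Tendsto (fun n : ℕ => tt n * hh n / n) atTop (nhds 0) := by
    apply tendsto_of_tendsto_of_tendsto_of_le_of_le' tendsto_const_nhds tendsto_tt_div
    · filter_upwards [eventually_ge_atTop 1] with n hn
      have hn0 : (0 : ℝ) < (n : ℝ) := by exact_mod_cast hn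
      exact div_nonneg (mul_nonneg (tt_nonneg n) (hh_nonneg n)) hn0.le
    · filter_upwards [eventually_ge_atTop 1] with n hn
      have hn0 : (0 : ℝ) < (n : ℝ) := by exact_mod_cast hn
      apply div_le_div_of_nonneg_right _ hn0.le
      calc tt n * hh n ≤ tt n * 1 := by
            exact mul_le_mul_of_nonneg_left (hh_le_one n) (tt_nonneg n)
        _ = tt n := mul_one _
  have hsq : Tendsto (fun n : ℕ => hh n ^ 2 / n) atTop (nhds 0) := by
    apply tendsto_of_tendsto_of_tendsto_of_le_of_le' tendsto_const_nhds tendsto_one_div_n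
    · filter_upwards [eventually_ge_atTop 1] with n hn
      have hn0 : (0 : ℝ) < (n : ℝ) := by exact_mod_cast hn
      exact div_nonneg (sq_nonneg _) hn0.le
    · filter_upwards [eventually_ge_atTop 1] with n hn
      have hn0 : (0 : ℝ) < (n : ℝ) := by exact_mod_cast hn
      apply div_le_div_of_nonneg_right _ hn0.le
      calc hh n ^ 2 ≤ 1 ^ 2 := by
            apply pow_le_pow_left₀ (hh_nonneg n) (hh_le_one n)
        _ = 1 := one_pow 2
  have hcomb := (tendsto_tt_sq.sub (hth.const_mul 2)).add hsq
  rw [mul_zero, sub_zero, add_zero] at hcomb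
  apply hcomb.congr
  intro n
  rw [ee_eq]
  ring

lemma expectation_half {n : ℕ} (f : (Fin n → Bool) → ℝ) :
    expectation (1/2) f = (∑ ω : Fin n → Bool, f ω) / 2 ^ n := by
  rw [expectation]
  rw [Finset.sum_congr rfl (fun ω _ => by rw [wt_half ω] :
    ∀ ω ∈ Finset.univ, wt (1/2) ω * f ω = (1/2) ^ n * f ω)]
  rw [← Finset.mul_sum, one_div, inv_pow, inv_mul_eq_div]

lemma expectation_mplus (n : ℕ) :
    expectation (1/2) (fun ω : Fin n → Bool => ((mplus ω : ℝ))) = ee n := by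
  rw [expectation_half, ee, Asum]
  push_cast
  ring

lemma expectation_mplus_sq (n : ℕ) :
    expectation (1/2) (fun ω : Fin n → Bool => ((mplus ω : ℝ)) ^ 2) = n - ee n := by
  rw [expectation_half]
  have h1 : ∑ ω : Fin n → Bool, ((mplus ω : ℝ)) ^ 2 = ((Bsum n : ℤ) : ℝ) := by
    rw [Bsum]
    push_cast
    ring
  rw [h1, Bsum_eq, ee]
  push_cast
  have h2 : (2 : ℝ) ^ n ≠ 0 := by positivity
  field_simp

theorem statement3 :
    Tendsto
      (fun n : ℕ =>
        (expectation (1/2) (fun ω : Fin n → Bool => ((mplus ω : ℝ)) ^ 2) -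
          (expectation (1/2) (fun ω : Fin n → Bool => (mplus ω : ℝ))) ^ 2) / n)
      atTop (nhds (1 - 2 / Real.pi)) := by
  have hlim : Tendsto (fun n : ℕ => 1 - ee n / n - ee n ^ 2 / n) atTop
      (nhds (1 - 0 - 2 / Real.pi)) :=
    (tendsto_const_nhds.sub tendsto_ee_div).sub tendsto_ee_sq
  rw [sub_zero] at hlim
  apply hlim.congr'
  filter_upwards [eventually_ge_atTop 1] with n hn
  rw [expectation_mplus, expectation_mplus_sq]
  have hn0 : (0 : ℝ) < (n : ℝ) := by exact_mod_cast hn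
  field_simp
end
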